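/- Let N ≥ 1 and n ≥ 1 be natural numbers and let x_1, …, x_n be complex numbers. Then ∑_{q=1}^{min(N, n)} ∑_{{J_1,…,J_q} ∈ Π_q({1,…,N})} ∑_{(j_1,…,j_q)} ∏_{k=1}^{q} x_{j_k}^{|J_k|} = (∑_{j=1}^{n} x_j)^{N}, where the innermost sum is over all injective assignments of indices j_k ∈ {1,…,n} to the blocks J_k (that is, over all injective maps from the set of blocks of the partition to {1,…,n}). -/
import Mathlib


/-- `IsPartitionInto p S P` means `P` is a partition of the finset `S` into `p`
nonempty, pairwise disjoint blocks whose union is `S`. -/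
def IsPartitionInto {ι : Type*} [DecidableEq ι] (p : ℕ) (S : Finset ι)
    (P : Finset (Finset ι)) : Prop :=
  P.card = p ∧ (∅ : Finset ι) ∉ P ∧
    (∀ I ∈ P, ∀ J ∈ P, I ≠ J → Disjoint I J) ∧ P.sup id = S

instance {ι : Type*} [DecidableEq ι] (p : ℕ) (S : Finset ι) :
    DecidablePred (IsPartitionInto p S) := fun _ => by
  unfold IsPartitionInto; infer_instance

namespace MultAux

open Finset

variable {N n : ℕ}

/-- The fiber of `g` over `j`. -/
def fiber (g : Fin N → Fin n) (j : Fin n) : Finset (Fin N) :=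
  Finset.univ.filter (fun i => g i = j)

/-- The set of nonempty fibers of `g`. -/
def fibers (g : Fin N → Fin n) : Finset (Finset (Fin N)) :=
  (Finset.univ.image g).image (fiber g)

lemma mem_fiber {g : Fin N → Fin n} {j : Fin n} {i : Fin N} :
    i ∈ fiber g j ↔ g i = j := by simp [fiber]

lemma self_mem_fiber (g : Fin N → Fin n) (i : Fin N) : i ∈ fiber g (g i) :=
  mem_fiber.2 rfl

lemma fiber_nonempty {g : Fin N → Fin n} {j : Fin n}
    (hj : j ∈ Finset.univ.image g) : (fiber g j).Nonempty := by
  obtain ⟨i, _, rfl⟩ := mem_image.1 hj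
  exact ⟨i, self_mem_fiber g i⟩

lemma fiber_injOn (g : Fin N → Fin n) :
    Set.InjOn (fiber g) (Finset.univ.image g) := by
  intro j hj j' _ h
  obtain ⟨i, hi⟩ := fiber_nonempty hj
  exact (mem_fiber.1 hi).symm.trans (mem_fiber.1 (h ▸ hi))

lemma isPartition_fibers (g : Fin N → Fin n) :
    IsPartitionInto (fibers g).card (Finset.univ : Finset (Fin N)) (fibers g) := by
  refine ⟨rfl, ?_, ?_, ?_⟩
  · intro h
    obtain ⟨j, hj, hje⟩ := mem_image.1 h
    exact (fiber_nonempty hj).ne_empty hje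
  · intro I hI J hJ hne
    obtain ⟨j, hj, rfl⟩ := mem_image.1 hI
    obtain ⟨j', hj', rfl⟩ := mem_image.1 hJ
    refine Finset.disjoint_left.2 fun i hi hi' => hne ?_
    exact congrArg (fiber g) ((mem_fiber.1 hi).symm.trans (mem_fiber.1 hi'))
  · apply le_antisymm
    · exact Finset.sup_le fun J _ => le_top
    · intro i _
      rw [Finset.mem_sup]
      exact ⟨fiber g (g i),
        mem_image_of_mem _ (mem_image_of_mem g (mem_univ i)), self_mem_fiber g i⟩

lemma existsUnique_block {p : ℕ} {P : Finset (Finset (Fin N))}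
    (hP : IsPartitionInto p (Finset.univ : Finset (Fin N)) P) (i : Fin N) :
    ∃! J, J ∈ P ∧ i ∈ J := by
  obtain ⟨-, -, hdisj, hsup⟩ := hP
  have : i ∈ P.sup id := hsup ▸ mem_univ i
  obtain ⟨J, hJ, hiJ⟩ := Finset.mem_sup.1 this
  refine ⟨J, ⟨hJ, hiJ⟩, ?_⟩
  rintro J' ⟨hJ', hiJ'⟩
  by_contra hne'
  exact (Finset.disjoint_left.1 (hdisj J' hJ' J hJ hne')) hiJ' hiJ

/-- The block of the partition `P` containing `i`. -/
noncomputable def blockOf {p : ℕ} {P : Finset (Finset (Fin N))}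
    (hP : IsPartitionInto p (Finset.univ : Finset (Fin N)) P) (i : Fin N) :
    Finset (Fin N) :=
  P.choose (fun J => i ∈ J) (existsUnique_block hP i)

lemma blockOf_mem {p : ℕ} {P : Finset (Finset (Fin N))}
    (hP : IsPartitionInto p (Finset.univ : Finset (Fin N)) P) (i : Fin N) :
    blockOf hP i ∈ P :=
  Finset.choose_mem _ _ _

lemma mem_blockOf {p : ℕ} {P : Finset (Finset (Fin N))}
    (hP : IsPartitionInto p (Finset.univ : Finset (Fin N)) P) (i : Fin N) :
    i ∈ blockOf hP i :=
  Finset.choose_property (fun J => i ∈ J) P (existsUnique_block hP i)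

lemma blockOf_eq {p : ℕ} {P : Finset (Finset (Fin N))}
    (hP : IsPartitionInto p (Finset.univ : Finset (Fin N)) P) {i : Fin N}
    {J : Finset (Fin N)} (hJ : J ∈ P) (hi : i ∈ J) : blockOf hP i = J :=
  ((existsUnique_block hP i).unique ⟨blockOf_mem hP i, mem_blockOf hP i⟩ ⟨hJ, hi⟩)

lemma block_nonempty {p : ℕ} {P : Finset (Finset (Fin N))}
    (hP : IsPartitionInto p (Finset.univ : Finset (Fin N)) P)
    {J : Finset (Fin N)} (hJ : J ∈ P) : J.Nonempty :=
  Finset.nonempty_iff_ne_empty.2 (fun h => hP.2.1 (h ▸ hJ))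

end MultAux

theorem multinomial_type_identity (N n : ℕ) (hN : 1 ≤ N) (hn : 1 ≤ n) (x : Fin n → ℂ) :
    ∑ q ∈ Finset.Icc 1 (min N n),
      ∑ P ∈ Finset.univ.filter (IsPartitionInto q (Finset.univ : Finset (Fin N))),
        ∑ f ∈ Finset.univ.filter (fun f : {J // J ∈ P} → Fin n => Function.Injective f),
          ∏ J : {J // J ∈ P}, x (f J) ^ (J.1.card)
      = (∑ j, x j) ^ N := by
  classical
  open Finset MultAux in
  -- the collection of all relevant partitions
  set T : Finset (Finset (Finset (Fin N))) :=
    Finset.univ.filter (fun P => IsPartitionInto P.card (Finset.univ : Finset (Fin N)) P ∧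
      P.card ∈ Finset.Icc 1 (min N n)) with hT
  set F : Finset (Finset (Fin N)) → ℂ := fun P =>
    ∑ f ∈ Finset.univ.filter (fun f : {J // J ∈ P} → Fin n => Function.Injective f),
      ∏ J : {J // J ∈ P}, x (f J) ^ (J.1.card) with hF
  have key : ∀ P ∈ T, F P =
      ∑ g ∈ Finset.univ.filter (fun g : Fin N → Fin n => fibers g = P), ∏ i, x (g i) := by
    intro P hPT
    obtain ⟨hP, hcard⟩ := (Finset.mem_filter.1 hPT).2
    -- constancy of g on blocks when fibers g = P
    have hconst : ∀ g : Fin N → Fin n, fibers g = P → ∀ J ∈ P, ∀ i ∈ J, ∀ i' ∈ J,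
        g i = g i' := by
      intro g hg J hJ i hi i' hi'
      rw [← hg] at hJ
      obtain ⟨j, _, rfl⟩ := Finset.mem_image.1 hJ
      rw [mem_fiber.1 hi, mem_fiber.1 hi']
    refine Finset.sum_nbij'
      (fun f => fun i => f ⟨blockOf hP i, blockOf_mem hP i⟩)
      (fun g => fun J => g ((J.1).min' (block_nonempty hP J.2))) ?_ ?_ ?_ ?_ ?_
    · -- f injective ⇒ fibers of the induced g equal P
      intro f hf
      have hf' : Function.Injective f := (Finset.mem_filter.1 hf).2
      refine Finset.mem_filter.2 ⟨Finset.mem_univ _, ?_⟩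
      set g : Fin N → Fin n := fun i => f ⟨blockOf hP i, blockOf_mem hP i⟩ with hgdef
      show fibers g = P
      have hfib : ∀ J (hJ : J ∈ P), fiber g (f ⟨J, hJ⟩) = J := by
        intro J hJ
        ext i
        rw [mem_fiber]
        constructor
        · intro h
          have : (⟨blockOf hP i, blockOf_mem hP i⟩ : {J // J ∈ P}) = ⟨J, hJ⟩ := hf' h
          have := congrArg Subtype.val this
          simp only at this
          exact this ▸ mem_blockOf hP i
        · intro hi
          show f _ = _
          congr 1
          exact Subtype.ext (blockOf_eq hP hJ hi)
      ext J
      constructor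
      · intro hJ
        obtain ⟨j, hj, rfl⟩ := Finset.mem_image.1 hJ
        obtain ⟨i, _, rfl⟩ := Finset.mem_image.1 hj
        have : g i = f ⟨blockOf hP i, blockOf_mem hP i⟩ := rfl
        rw [this, hfib _ (blockOf_mem hP i)]
        exact blockOf_mem hP i
      · intro hJ
        obtain ⟨i, hi⟩ := block_nonempty hP hJ
        have hgi : g i = f ⟨J, hJ⟩ := by
          show f _ = _
          congr 1
          exact Subtype.ext (blockOf_eq hP hJ hi)
        rw [← hfib J hJ, ← hgi]
        exact Finset.mem_image_of_mem _ (Finset.mem_image_of_mem g (Finset.mem_univ i))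
    · -- fibers g = P ⇒ induced f injective
      intro g hg
      have hg' : fibers g = P := (Finset.mem_filter.1 hg).2
      rw [Finset.mem_filter]
      refine ⟨Finset.mem_univ _, ?_⟩
      intro J J' h
      -- J.1 and J'.1 are fibers of g
      have hJf : ∀ (K : {J // J ∈ P}), fiber g (g (K.1.min' (block_nonempty hP K.2))) = K.1 := by
        intro K
        have hK : K.1 ∈ fibers g := by rw [hg']; exact K.2
        obtain ⟨j, _, hfj⟩ := Finset.mem_image.1 hK
        have hmin : (K.1.min' (block_nonempty hP K.2)) ∈ K.1 :=
          Finset.min'_mem _ _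
        have hmin2 : (K.1.min' (block_nonempty hP K.2)) ∈ fiber g j := by
          rw [hfj]; exact hmin
        exact (congrArg (fiber g) (mem_fiber.1 hmin2)).trans hfj
      exact Subtype.ext ((hJf J).symm.trans ((congrArg (fiber g) h).trans (hJf J')))
    · -- left inverse
      intro f hf
      funext J
      have hmin : ((blockOf hP (J.1.min' (block_nonempty hP J.2)))) = J.1 :=
        blockOf_eq hP J.2 (Finset.min'_mem _ _)
      show f _ = f J
      congr 1
      exact Subtype.ext hmin
    · -- right inverse
      intro g hg
      have hg' : fibers g = P := (Finset.mem_filter.1 hg).2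
      have hconst' := hconst g hg'
      funext i
      set J := blockOf hP i with hJ
      have hJP : J ∈ P := blockOf_mem hP i
      exact hconst' J hJP (J.min' (block_nonempty hP hJP)) (Finset.min'_mem _ _) i
        (mem_blockOf hP i)
    · -- products agree
      intro f hf
      set g : Fin N → Fin n := fun i => f ⟨blockOf hP i, blockOf_mem hP i⟩ with hgdef
      have hgJ : ∀ (J : {J // J ∈ P}), ∀ i ∈ J.1, g i = f J := by
        intro J i hi
        show f _ = f J
        congr 1
        exact Subtype.ext (blockOf_eq hP J.2 hi)
      have hdisj : (↑P : Set (Finset (Fin N))).PairwiseDisjoint id := by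
        intro I hI J hJ hne
        exact hP.2.2.1 I hI J hJ hne
      calc ∏ J : {J // J ∈ P}, x (f J) ^ (J.1.card)
          = ∏ J ∈ P.attach, ∏ i ∈ J.1, x (g i) := by
            rw [Finset.univ_eq_attach]
            refine Finset.prod_congr rfl fun J _ => ?_
            rw [Finset.prod_congr rfl (fun i hi => by rw [hgJ J i hi]),
              Finset.prod_const]
        _ = ∏ J ∈ P, ∏ i ∈ J, x (g i) := Finset.prod_attach P (fun J => ∏ i ∈ J, x (g i))
        _ = ∏ i ∈ P.biUnion id, x (g i) := (Finset.prod_biUnion hdisj).symm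
        _ = ∏ i, x (g i) := by
            rw [← Finset.sup_eq_biUnion, hP.2.2.2]
  -- every g has fibers in T
  have mapsto : ∀ g : Fin N → Fin n, fibers g ∈ T := by
    intro g
    rw [hT, Finset.mem_filter]
    refine ⟨Finset.mem_univ _, isPartition_fibers g, ?_⟩
    rw [Finset.mem_Icc]
    have hcard : (fibers g).card = (Finset.univ.image g).card :=
      Finset.card_image_of_injOn (fiber_injOn g)
    constructor
    · rw [hcard]
      have : (Finset.univ.image g).Nonempty :=
        ⟨g ⟨0, hN⟩, Finset.mem_image_of_mem g (Finset.mem_univ _)⟩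
      exact Finset.card_pos.2 this
    · rw [hcard, le_min_iff]
      constructor
      · calc (Finset.univ.image g).card ≤ (Finset.univ : Finset (Fin N)).card :=
              Finset.card_image_le
          _ = N := by simp
      · calc (Finset.univ.image g).card ≤ (Finset.univ : Finset (Fin n)).card :=
              Finset.card_le_card (Finset.subset_univ _)
          _ = n := by simp
  calc ∑ q ∈ Finset.Icc 1 (min N n),
      ∑ P ∈ Finset.univ.filter (IsPartitionInto q (Finset.univ : Finset (Fin N))),
        ∑ f ∈ Finset.univ.filter (fun f : {J // J ∈ P} → Fin n => Function.Injective f),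
          ∏ J : {J // J ∈ P}, x (f J) ^ (J.1.card)
      = ∑ q ∈ Finset.Icc 1 (min N n), ∑ P ∈ T.filter (fun P => P.card = q), F P := by
        refine Finset.sum_congr rfl fun q hq => ?_
        have hset : Finset.univ.filter (IsPartitionInto q (Finset.univ : Finset (Fin N)))
            = T.filter (fun P => P.card = q) := by
          ext P
          simp only [hT, Finset.mem_filter, Finset.mem_univ, true_and, Finset.filter_filter]
          constructor
          · intro h
            have hc : P.card = q := h.1
            exact ⟨⟨hc ▸ h, hc ▸ hq⟩, hc⟩
          · rintro ⟨⟨h, _⟩, hc⟩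
            exact hc ▸ h
        rw [hset]
    _ = ∑ P ∈ T, F P := by
        refine Finset.sum_fiberwise_of_maps_to (fun P hP => ?_) F
        rw [hT, Finset.mem_filter] at hP
        exact hP.2.2
    _ = ∑ P ∈ T, ∑ g ∈ Finset.univ.filter (fun g : Fin N → Fin n => fibers g = P),
          ∏ i, x (g i) := Finset.sum_congr rfl key
    _ = ∑ g : Fin N → Fin n, ∏ i, x (g i) :=
        Finset.sum_fiberwise_of_maps_to (fun g _ => mapsto g) _
    _ = (∑ j, x j) ^ N := by
        rw [Finset.sum_pow']
        refine (Finset.sum_nbij' (fun g => g) (fun g => g) ?_ ?_ ?_ ?_ ?_).symm <;>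
          simp [Fintype.mem_piFinset]
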